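/- Let ω_out, ω_in ∈ ℝ and suppose κ : 𝓡 → ℂ satisfies κ((R_Z(γ), t·e₃)·x) = exp(−i·(ω_out − ω_in·⟨e₃, d_x⟩)·t)·κ(x) for all γ, t ∈ ℝ and all rays x = (d_x, m_x) ∈ 𝓡. If ω_out ≠ ω_in, then κ(x) = 0 for every ray x with d_x = e₃; if ω_out ≠ −ω_in, then κ(x) = 0 for every ray x with d_x = −e₃. -/

import Mathlib

noncomputable section
open scoped InnerProductSpace

/-- ℝ³ with the Euclidean norm. -/
abbrev E3 : Type := EuclideanSpace ℝ (Fin 3)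

/-- Elements of SE(3): a pair of a 3×3 matrix and a translation vector. -/
abbrev SE3 : Type := Matrix (Fin 3) (Fin 3) ℝ × E3

/-- Matrix-vector multiplication on ℝ³. -/
def mv (R : Matrix (Fin 3) (Fin 3) ℝ) (v : E3) : E3 := WithLp.toLp 2 (R.mulVec v)

/-- Cross product on ℝ³. -/
def cross3 (a b : E3) : E3 :=
  WithLp.toLp 2 ![a 1 * b 2 - a 2 * b 1, a 2 * b 0 - a 0 * b 2, a 0 * b 1 - a 1 * b 0]

/-- `R` is a special orthogonal 3×3 matrix: `RᵀR = I` and `det R = 1`. -/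
def isSO3 (R : Matrix (Fin 3) (Fin 3) ℝ) : Prop :=
  R.transpose * R = 1 ∧ R.det = 1

/-- `(d, m)` are Plücker coordinates of an oriented line: `d` is a unit
direction and `m` is a moment with `⟨d, m⟩ = 0`. -/
def isRay (d m : E3) : Prop := ‖d‖ = 1 ∧ ⟪d, m⟫_ℝ = 0

/-- The standard basis vector e₁. -/
def e1 : E3 := !₂[1, 0, 0]

/-- The standard basis vector e₂. -/
def e2 : E3 := !₂[0, 1, 0]

/-- The standard basis vector e₃. -/
def e3 : E3 := !₂[0, 0, 1]

/-- Action of `(R, t) ∈ SE(3)` on Plücker coordinates: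
`(R,t)·(d,m) = (Rd, Rm + t × (Rd))`. -/
def rayAct (R : Matrix (Fin 3) (Fin 3) ℝ) (t : E3) (d m : E3) : E3 × E3 :=
  (mv R d, mv R m + cross3 t (mv R d))

/-- Multiplication in SE(3): `(R₁,t₁)·(R₂,t₂) = (R₁R₂, t₁ + R₁t₂)`. -/
def se3Mul (g₁ g₂ : SE3) : SE3 := (g₁.1 * g₂.1, g₁.2 + mv g₁.1 g₂.2)

/-- Inverse in SE(3) (for `g.1 ∈ SO(3)`): `(R,t)⁻¹ = (Rᵀ, -Rᵀt)`. -/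
def se3Inv (g : SE3) : SE3 := (g.1.transpose, -(mv g.1.transpose g.2))

/-- Action of `g ∈ SE(3)` on the ray space. -/
def act (g : SE3) (x : E3 × E3) : E3 × E3 := rayAct g.1 g.2 x.1 x.2

/-- Action of `g = (R,t) ∈ SE(3)` on points of ℝ³: `g·p = Rp + t`. -/
def actPt (g : SE3) (p : E3) : E3 := mv g.1 p + g.2

/-- The origin ray `η = (e₃, 0)`. -/
def eta : E3 × E3 := (e3, 0)

/-- The twist `h(g, x) = s(g·x)⁻¹ · g · s(x)` of a section `s`. -/
def twist (s : E3 × E3 → SE3) (g : SE3) (x : E3 × E3) : SE3 :=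
  se3Mul (se3Inv (s (act g x))) (se3Mul g (s x))

/-- Rotation by γ about the z-axis. -/
def RZ (γ : ℝ) : Matrix (Fin 3) (Fin 3) ℝ :=
  !![Real.cos γ, -Real.sin γ, 0; Real.sin γ, Real.cos γ, 0; 0, 0, 1]

/-- Rotation by β about the y-axis. -/
def RY (β : ℝ) : Matrix (Fin 3) (Fin 3) ℝ :=
  !![Real.cos β, 0, Real.sin β; 0, 1, 0; -Real.sin β, 0, Real.cos β]

/-- The underlying line of the ray with Plücker coordinates `(d, m)`:
`L(d,m) = {p : p × d = m}`. -/
def lineOf (d m : E3) : Set E3 := {p : E3 | cross3 p d = m}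

/-- Infimum of the Euclidean distances between points of the line `L(d,m)`
and points of the z-axis. -/
def Dzaxis (d m : E3) : ℝ :=
  sInf {r : ℝ | ∃ p ∈ lineOf d m, ∃ s : ℝ, r = dist p (s • e3)}

/-- The z-coordinate `g(x) = e₃·(c - λ·d)` (with `c = d × m` and
`λ = ((e₁·c)(e₁·d) + (e₂·c)(e₂·d))/(1 - (e₃·d)²)`) of the point of `L(d,m)`
closest to the z-axis (for `d ≠ ±e₃`). -/
def zfoot (d m : E3) : ℝ :=
  ⟪e3, cross3 d m - ((⟪e1, cross3 d m⟫_ℝ * ⟪e1, d⟫_ℝ + ⟪e2, cross3 d m⟫_ℝ * ⟪e2, d⟫_ℝ)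
      / (1 - ⟪e3, d⟫_ℝ ^ 2)) • d⟫_ℝ


lemma RZ_zero : RZ 0 = 1 := by
  ext i j
  fin_cases i <;> fin_cases j <;>
    simp [RZ, Matrix.one_apply, Matrix.vecHead, Matrix.vecTail, Function.comp]

lemma rayAct_fix (t : ℝ) (m : E3) (d : E3) (hd : d = e3 ∨ d = -e3) :
    rayAct (RZ 0) (t • e3) d m = (d, m) := by
  have hm : ∀ v : E3, mv (RZ 0) v = v := by
    intro v; simp [mv, RZ_zero]
  have hc : cross3 (t • e3) d = 0 := by
    rcases hd with h | h <;> subst h <;>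
      · ext i
        fin_cases i <;>
          simp [cross3, e3, Matrix.vecHead, Matrix.vecTail]
  simp [rayAct, hm, hc]

lemma exp_all_one {a : ℝ} (h : ∀ t : ℝ, Complex.exp (-Complex.I * (a : ℂ) * (t : ℂ)) = 1) :
    a = 0 := by
  by_contra ha
  have ha' : (a : ℂ) ≠ 0 := Complex.ofReal_ne_zero.mpr ha
  have := h (Real.pi / a)
  rw [show -Complex.I * (a : ℂ) * ((Real.pi / a : ℝ) : ℂ) = -(Real.pi * Complex.I) by
    push_cast; field_simp] at this
  rw [Complex.exp_neg, Complex.exp_pi_mul_I] at this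
  norm_num at this

lemma vanish {a : ℝ} (ha : a ≠ 0) {z : ℂ}
    (h : ∀ t : ℝ, z = Complex.exp (-Complex.I * (a : ℂ) * (t : ℂ)) * z) : z = 0 := by
  by_contra hz
  apply ha
  apply exp_all_one
  intro t
  have h1 : Complex.exp (-Complex.I * (a : ℂ) * (t : ℂ)) * z = 1 * z := by
    rw [one_mul]; exact (h t).symm
  exact mul_right_cancel₀ hz h1

lemma inner_e3_e3 : ⟪e3, e3⟫_ℝ = 1 := by
  rw [PiLp.inner_apply]; simp [e3, Fin.sum_univ_three]

lemma inner_e3_neg_e3 : ⟪e3, -e3⟫_ℝ = -1 := by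
  rw [inner_neg_right, inner_e3_e3]

/-- a kernel satisfying the stabilizer-equivariance constraint
must vanish on rays with direction `e₃` when `ω_out ≠ ω_in`, and on rays with
direction `−e₃` when `ω_out ≠ −ω_in`. -/
theorem statement14 (ωout ωin : ℝ) (κ : E3 × E3 → ℂ)
    (hκ : ∀ γ t : ℝ, ∀ d m : E3, isRay d m →
      κ (rayAct (RZ γ) (t • e3) d m)
        = Complex.exp (-Complex.I * ((ωout : ℂ) - (ωin : ℂ) * (⟪e3, d⟫_ℝ : ℂ)) * (t : ℂ))
            * κ (d, m)) :
    (ωout ≠ ωin → ∀ d m : E3, isRay d m → d = e3 → κ (d, m) = 0) ∧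
    (ωout ≠ -ωin → ∀ d m : E3, isRay d m → d = -e3 → κ (d, m) = 0) := by
  constructor
  · intro hw d m hray hd
    subst hd
    have ha : ωout - ωin ≠ 0 := sub_ne_zero.mpr hw
    apply vanish ha
    intro t
    have h := hκ 0 t _ m hray
    rw [rayAct_fix t m _ (Or.inl rfl), inner_e3_e3] at h
    rw [show (-Complex.I * (((ωout - ωin : ℝ)) : ℂ) * (t : ℂ))
        = -Complex.I * ((ωout : ℂ) - (ωin : ℂ) * (((1:ℝ)) : ℂ)) * (t : ℂ) by push_cast; ring]
    exact h
  · intro hw d m hray hd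
    subst hd
    have ha : ωout + ωin ≠ 0 := by
      intro h0; exact hw (by linarith)
    apply vanish ha
    intro t
    have h := hκ 0 t _ m hray
    rw [rayAct_fix t m _ (Or.inr rfl), inner_e3_neg_e3] at h
    rw [show (-Complex.I * (((ωout + ωin : ℝ)) : ℂ) * (t : ℂ))
        = -Complex.I * ((ωout : ℂ) - (ωin : ℂ) * (((-1:ℝ)) : ℂ)) * (t : ℂ) by push_cast; ring]
    exact h

end
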